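/- Let ε > 0, α > 0, k > 0, z > 0, V ≥ 0, u ≥ 0, and suppose S* ≥ 0 satisfies the first-order optimality condition u = D(V, S*), where D(V, S) = ε·erfi(S/√(4·α·(V + z + k·S))) − (ε·k·√α/(2·√(V + z + k·S)))·exp(S²/(4·α·(V + z + k·S))). Then S* ≤ 4·α·k·p² + √(4·α·(V + z))·p, where p = 1 + √(log(2·u/ε + 1)). -/

import Mathlib

/-- The imaginary error function, `erfi x = ∫ u in 0..x, exp (u²)`
(the conventional erfi scaled by `√π / 2`). -/
noncomputable def erfi (x : ℝ) : ℝ := ∫ u in (0:ℝ)..x, Real.exp (u ^ 2)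

/-- `D(V, S)`, the partial derivative in `S` of the shifted potential
`Φ(V, S) = φ(V + z + k·S, S)`. -/
noncomputable def Dfun (ε α k z V S : ℝ) : ℝ :=
  ε * erfi (S / Real.sqrt (4 * α * (V + z + k * S))) -
    ε * k * Real.sqrt α / (2 * Real.sqrt (V + z + k * S)) *
      Real.exp (S ^ 2 / (4 * α * (V + z + k * S)))

lemma exp_sq_integrable (a b : ℝ) :
    IntervalIntegrable (fun u : ℝ => Real.exp (u ^ 2)) MeasureTheory.volume a b :=
  (Real.continuous_exp.comp (continuous_pow 2)).intervalIntegrable a b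

lemma erfi_one_lower : (4:ℝ)/3 ≤ erfi 1 := by
  unfold erfi
  have h : (4:ℝ)/3 = ∫ u in (0:ℝ)..1, (1 + u ^ 2) := by
    rw [intervalIntegral.integral_add intervalIntegrable_const
      ((continuous_pow 2).intervalIntegrable _ _), intervalIntegral.integral_const,
      integral_pow]
    norm_num
  rw [h]
  apply intervalIntegral.integral_mono_on zero_le_one
    (intervalIntegrable_const.add ((continuous_pow 2).intervalIntegrable _ _))
    (exp_sq_integrable 0 1)
  intro u _
  have := Real.add_one_le_exp (u ^ 2)
  linarith

lemma mul_exp_integral (a b : ℝ) :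
    ∫ u in a..b, u * Real.exp (u ^ 2) = (Real.exp (b ^ 2) - Real.exp (a ^ 2)) / 2 := by
  have hderiv : ∀ x ∈ Set.uIcc a b,
      HasDerivAt (fun y : ℝ => Real.exp (y ^ 2) / 2) (x * Real.exp (x ^ 2)) x := by
    intro x _
    have h := ((hasDerivAt_pow 2 x).exp).div_const 2
    refine h.congr_deriv ?_
    simp [pow_one]
    ring
  have hcont : Continuous (fun u : ℝ => u * Real.exp (u ^ 2)) := by continuity
  rw [intervalIntegral.integral_eq_sub_of_hasDerivAt hderiv (hcont.intervalIntegrable a b)]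
  ring

lemma erfi_lower (t : ℝ) (ht : 1 ≤ t) :
    4/3 + (Real.exp (t ^ 2) - Real.exp 1) / (2 * t) ≤ erfi t := by
  have htpos : (0:ℝ) < t := lt_of_lt_of_le one_pos ht
  have hsplit : erfi t = erfi 1 + ∫ u in (1:ℝ)..t, Real.exp (u ^ 2) := by
    unfold erfi
    rw [← intervalIntegral.integral_add_adjacent_intervals (exp_sq_integrable 0 1)
      (exp_sq_integrable 1 t)]
  have hcont : Continuous (fun u : ℝ => u * Real.exp (u ^ 2)) := by continuity
  have heval : ∫ u in (1:ℝ)..t, (1/t) * (u * Real.exp (u ^ 2))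
      = (Real.exp (t ^ 2) - Real.exp 1) / (2 * t) := by
    rw [intervalIntegral.integral_const_mul, mul_exp_integral]
    norm_num
    ring
  have hmono : ∫ u in (1:ℝ)..t, (1/t) * (u * Real.exp (u ^ 2))
      ≤ ∫ u in (1:ℝ)..t, Real.exp (u ^ 2) := by
    apply intervalIntegral.integral_mono_on ht
      ((continuous_const.mul hcont).intervalIntegrable _ _) (exp_sq_integrable 1 t)
    intro u hu
    have hu1 : 1 ≤ u := hu.1
    have hut : u ≤ t := hu.2
    have hE := Real.exp_pos (u ^ 2)
    simp only [Pi.mul_apply]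
    rw [div_mul_eq_mul_div, div_le_iff₀ htpos]
    nlinarith
  linarith [erfi_one_lower, heval ▸ hmono, hsplit.le, hsplit.ge]

lemma t_bound (ε u t c : ℝ) (hε : 0 < ε) (hu : 0 ≤ u) (ht : 1 ≤ t)
    (hc : c ≤ 1/(4*t))
    (hopt : u = ε * (erfi t - c * Real.exp (t ^ 2))) :
    t ≤ 1 + Real.sqrt (Real.log (2 * u / ε + 1)) := by
  have htpos : (0:ℝ) < t := lt_of_lt_of_le one_pos ht
  have hE := Real.exp_pos (t ^ 2)
  have herfi := erfi_lower t ht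
  have hcE : c * Real.exp (t ^ 2) ≤ Real.exp (t ^ 2) / (4 * t) := by
    have h := mul_le_mul_of_nonneg_right hc hE.le
    rw [one_div, inv_mul_eq_div] at h
    exact h
  have hue : u / ε = erfi t - c * Real.exp (t ^ 2) := by
    rw [hopt]; field_simp
  have hs1 : (Real.exp (t ^ 2) - Real.exp 1) / (2 * t)
      = Real.exp (t ^ 2) / (2 * t) - Real.exp 1 / (2 * t) := sub_div _ _ _
  have hs2 : Real.exp (t ^ 2) / (2 * t) - Real.exp (t ^ 2) / (4 * t)
      = Real.exp (t ^ 2) / (4 * t) := by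
    field_simp
    ring
  have key : 4/3 - Real.exp 1 / (2 * t) + Real.exp (t ^ 2) / (4 * t) ≤ u / ε := by
    rw [hue]; linarith
  have hX1 : 1 ≤ Real.exp ((t - 1) ^ 2) := Real.one_le_exp (sq_nonneg _)
  have hfac : Real.exp (t ^ 2) = Real.exp ((t - 1) ^ 2) * Real.exp (2 * t - 1) := by
    rw [← Real.exp_add]; ring_nf
  have h2t : Real.exp 1 * t ≤ Real.exp (2 * t - 1) := by
    have h := Real.add_one_le_exp (2 * t - 2)
    have hrw : Real.exp (2 * t - 1) = Real.exp 1 * Real.exp (2 * t - 2) := by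
      rw [← Real.exp_add]; ring_nf
    rw [hrw]
    have hE1 := Real.exp_pos 1
    nlinarith
  have hEt : Real.exp 1 / 4 * Real.exp ((t - 1) ^ 2) ≤ Real.exp (t ^ 2) / (4 * t) := by
    rw [hfac, le_div_iff₀ (by positivity)]
    have hX0 : (0:ℝ) ≤ Real.exp ((t - 1) ^ 2) := (Real.exp_pos _).le
    nlinarith [mul_le_mul_of_nonneg_left h2t hX0]
  have h1 : Real.exp 1 / (2 * t) ≤ Real.exp 1 / 2 := by
    apply div_le_div_of_nonneg_left (Real.exp_pos 1).le (by norm_num)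
    linarith
  have hkey : 4/3 - Real.exp 1 / 2 + Real.exp 1 / 4 * Real.exp ((t - 1) ^ 2) ≤ u / ε := by
    linarith
  have hXle : Real.exp ((t - 1) ^ 2) ≤ 2 * u / ε + 1 := by
    have hd9u := Real.exp_one_lt_d9
    have hd9l := Real.exp_one_gt_d9
    have h2ue : 2 * u / ε = 2 * (u / ε) := by ring
    rw [h2ue]
    nlinarith
  have hpos : (0:ℝ) < 2 * u / ε + 1 := by
    have : (0:ℝ) ≤ 2 * u / ε := div_nonneg (by linarith) hε.le
    linarith
  have hlog : (t - 1) ^ 2 ≤ Real.log (2 * u / ε + 1) := by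
    rw [Real.le_log_iff_exp_le hpos]; exact hXle
  have hfin : t - 1 ≤ Real.sqrt (Real.log (2 * u / ε + 1)) := by
    calc t - 1 = Real.sqrt ((t - 1) ^ 2) := (Real.sqrt_sq (by linarith)).symm
      _ ≤ _ := Real.sqrt_le_sqrt hlog
  linarith

/-- Any `S* ≥ 0` satisfying the first-order optimality condition `u = D(V, S*)`
is bounded by `4αkp² + √(4α(V + z))·p`, where `p = 1 + √(log(2u/ε + 1))`. -/
theorem optimality_point_bound (ε α k z V u Sstar : ℝ)
    (hε : 0 < ε) (hα : 0 < α) (hk : 0 < k) (hz : 0 < z)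
    (hV : 0 ≤ V) (hu : 0 ≤ u) (hSstar : 0 ≤ Sstar)
    (hopt : u = Dfun ε α k z V Sstar) :
    Sstar ≤ 4 * α * k * (1 + Real.sqrt (Real.log (2 * u / ε + 1))) ^ 2 +
      Real.sqrt (4 * α * (V + z)) * (1 + Real.sqrt (Real.log (2 * u / ε + 1))) := by
  simp only [Dfun] at hopt
  have hkS : 0 ≤ k * Sstar := mul_nonneg hk.le hSstar
  set W := V + z + k * Sstar with hW
  have hWpos : 0 < W := by rw [hW]; linarith
  set q := Real.sqrt (4 * α * W) with hqdef
  have hqpos : 0 < q := Real.sqrt_pos.mpr (by positivity)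
  set t := Sstar / q with htdef
  have ht0 : 0 ≤ t := div_nonneg hSstar hqpos.le
  have hq2 : q ^ 2 = 4 * α * W := Real.sq_sqrt (by positivity)
  have hSt : Sstar = t * q := by rw [htdef]; field_simp
  have harg : Sstar ^ 2 / (4 * α * W) = t ^ 2 := by
    rw [htdef, div_pow, hq2]
  rw [harg] at hopt
  set c := k * Real.sqrt α / (2 * Real.sqrt W) with hcdef
  have hopt' : u = ε * (erfi t - c * Real.exp (t ^ 2)) := by
    rw [hopt, hcdef]; ring
  -- relation q = 2 √α √W
  have hqW : q = 2 * Real.sqrt α * Real.sqrt W := by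
    have h2 : (2 * Real.sqrt α * Real.sqrt W) ^ 2 = 4 * α * W := by
      rw [mul_pow, mul_pow, Real.sq_sqrt hα.le, Real.sq_sqrt hWpos.le]; ring
    rw [hqdef, ← h2, Real.sqrt_sq (by positivity)]
  have hsW : 0 < Real.sqrt W := Real.sqrt_pos.mpr hWpos
  have hsW2 : Real.sqrt W * Real.sqrt W = W := Real.mul_self_sqrt hWpos.le
  -- bound on q
  have ha2 : Real.sqrt (4 * α * (V + z)) ^ 2 = 4 * α * (V + z) := Real.sq_sqrt (by positivity)
  have hapos : 0 < Real.sqrt (4 * α * (V + z)) := Real.sqrt_pos.mpr (by positivity)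
  have hqeq : q ^ 2 = 4 * α * (V + z) + 4 * α * k * t * q := by
    rw [hq2, hW, hSt]; ring
  have hqb : q ≤ 4 * α * k * t + Real.sqrt (4 * α * (V + z)) := by
    set a := Real.sqrt (4 * α * (V + z)) with hadef
    set m := 4 * α * k * t with hmdef
    have hm0 : 0 ≤ m := by rw [hmdef]; positivity
    nlinarith [mul_nonneg hm0 hapos.le, mul_pos hqpos hapos]
  have htp : t ≤ 1 + Real.sqrt (Real.log (2 * u / ε + 1)) := by
    rcases le_or_gt t 1 with h | h
    · have := Real.sqrt_nonneg (Real.log (2 * u / ε + 1))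
      linarith
    · apply t_bound ε u t c hε hu h.le ?_ hopt'
      -- c ≤ 1/(4t)
      have hWk : 2 * (k * Real.sqrt α * t) ≤ Real.sqrt W := by
        have h1 : k * Sstar ≤ W := by rw [hW]; linarith
        have h2 : k * Sstar = k * t * (2 * Real.sqrt α * Real.sqrt W) := by
          rw [hSt, hqW]; ring
        nlinarith [hsW, hsW2]
      rw [hcdef, div_le_div_iff₀ (by positivity) (by positivity)]
      ring_nf
      ring_nf at hWk
      linarith
  -- conclude
  have hp0 : 0 ≤ 1 + Real.sqrt (Real.log (2 * u / ε + 1)) := by positivity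
  have hfin : Sstar ≤ 4 * α * k * t ^ 2 + Real.sqrt (4 * α * (V + z)) * t := by
    rw [hSt]
    calc t * q ≤ t * (4 * α * k * t + Real.sqrt (4 * α * (V + z))) :=
          mul_le_mul_of_nonneg_left hqb ht0
      _ = 4 * α * k * t ^ 2 + Real.sqrt (4 * α * (V + z)) * t := by ring
  have h1 : 4 * α * k * t ^ 2 ≤ 4 * α * k * (1 + Real.sqrt (Real.log (2 * u / ε + 1))) ^ 2 :=
    mul_le_mul_of_nonneg_left (pow_le_pow_left₀ ht0 htp 2) (by positivity)
  have h2 : Real.sqrt (4 * α * (V + z)) * t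
      ≤ Real.sqrt (4 * α * (V + z)) * (1 + Real.sqrt (Real.log (2 * u / ε + 1))) :=
    mul_le_mul_of_nonneg_left htp hapos.le
  linarith
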